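/- Let p be an odd prime, m ≥ 1, and ζ, η primitive p^m-th roots of unity. The metric groups (Z/p^m Z, q_ζ) and (Z/p^m Z, q_η), with q_ζ(x) = ζ^{x²}, are isomorphic if and only if η = ζ^{a²} for some integer a relatively prime to p. -/

import Mathlib

/-- For odd prime `p` and primitive `p^m`-th roots of unity `ζ, η`, the metric groups
`(ℤ/p^m, q_ζ)` and `(ℤ/p^m, q_η)` with `q_ζ(x) = ζ^{x²}` are isomorphic iff
`η = ζ^{a²}` for some `a` coprime to `p`. -/
theorem stmt11 {k : Type*} [Field k] [CharZero k]
    (p m : ℕ) (hp : p.Prime) (hodd : p ≠ 2) (hm : 1 ≤ m)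
    (ζ η : kˣ) (hζ : IsPrimitiveRoot ζ (p ^ m)) (hη : IsPrimitiveRoot η (p ^ m)) :
    (∃ e : ZMod (p ^ m) ≃+ ZMod (p ^ m),
        ∀ x : ZMod (p ^ m), η ^ ((e x).val ^ 2) = ζ ^ (x.val ^ 2)) ↔
      ∃ a : ℕ, a.Coprime p ∧ η = ζ ^ (a ^ 2) := by
  have hn1 : 1 < p ^ m := Nat.one_lt_pow (by omega) hp.one_lt
  haveI : NeZero (p ^ m) := ⟨by omega⟩
  haveI : Fact (1 < p ^ m) := ⟨hn1⟩
  have hoζ : orderOf ζ = p ^ m := hζ.eq_orderOf.symm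
  have hoη : orderOf η = p ^ m := hη.eq_orderOf.symm
  constructor
  · rintro ⟨e, he⟩
    have hlin : ∀ x : ZMod (p ^ m), e x = x * e 1 := by
      intro x
      conv_lhs => rw [show x = x.val • (1 : ZMod (p ^ m)) by
        simp [nsmul_eq_mul, ZMod.natCast_val, ZMod.cast_id]]
      rw [map_nsmul, nsmul_eq_mul, ZMod.natCast_val, ZMod.cast_id]
    -- e 1 is a unit
    obtain ⟨y, hy⟩ := e.surjective 1
    have hunit : IsUnit (e 1) := IsUnit.of_mul_eq_one y (by
      rw [mul_comm, ← hlin, hy])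
    obtain ⟨u, hu⟩ := hunit
    set a : ℕ := ((u⁻¹ : (ZMod (p ^ m))ˣ) : ZMod (p ^ m)).val with ha
    refine ⟨a, ?_, ?_⟩
    · exact (ZMod.val_coe_unit_coprime u⁻¹).coprime_dvd_right
        (dvd_pow_self p (by omega))
    · have h1 : η ^ ((e 1).val ^ 2) = ζ := by
        have := he 1
        rwa [ZMod.val_one, one_pow, pow_one] at this
      have hmod : (e 1).val * a ≡ 1 [MOD p ^ m] := by
        apply (ZMod.natCast_eq_natCast_iff _ _ _).mp
        push_cast
        rw [ZMod.natCast_val, ZMod.cast_id, ZMod.natCast_val, ZMod.cast_id, ← hu,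
          ← Units.val_mul, mul_inv_cancel, Units.val_one]
      have hpow : η ^ (((e 1).val * a) ^ 2) = η ^ 1 :=
        pow_eq_pow_iff_modEq.mpr (by rw [hoη]; simpa using hmod.pow 2)
      calc η = η ^ (((e 1).val * a) ^ 2) := by rw [hpow, pow_one]
           _ = (η ^ ((e 1).val ^ 2)) ^ (a ^ 2) := by rw [mul_pow, pow_mul]
           _ = ζ ^ (a ^ 2) := by rw [h1]
  · rintro ⟨a, hac, rfl⟩
    have hacm : a.Coprime (p ^ m) := hac.pow_right m
    set b : (ZMod (p ^ m))ˣ := (ZMod.unitOfCoprime a hacm)⁻¹ with hb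
    have hab : (a : ZMod (p ^ m)) * (b : ZMod (p ^ m)) = 1 := by
      rw [hb, show ((a : ℕ) : ZMod (p ^ m)) = (ZMod.unitOfCoprime a hacm : ZMod (p ^ m)) from rfl,
        ← Units.val_mul, mul_inv_cancel, Units.val_one]
    refine ⟨{ toFun := fun x => (b : ZMod (p ^ m)) * x,
              invFun := fun x => ((b⁻¹ : (ZMod (p ^ m))ˣ) : ZMod (p ^ m)) * x,
              left_inv := fun x => by show _ * (_ * _) = _; rw [← mul_assoc, ← Units.val_mul, inv_mul_cancel,
                Units.val_one, one_mul],
              right_inv := fun x => by show _ * (_ * _) = _; rw [← mul_assoc, ← Units.val_mul, mul_inv_cancel,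
                Units.val_one, one_mul],
              map_add' := fun x y => mul_add _ _ _ }, ?_⟩
    intro x
    simp only [AddEquiv.coe_mk, Equiv.coe_fn_mk]
    rw [← pow_mul, pow_eq_pow_iff_modEq, hoζ]
    refine (ZMod.natCast_eq_natCast_iff _ _ _).mp ?_
    push_cast
    rw [ZMod.natCast_val, ZMod.cast_id, ZMod.natCast_val, ZMod.cast_id]
    rw [← mul_pow, ← mul_assoc, hab, one_mul]
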